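/- Let H be a closed m-shift system for f, and let W_1, …, W_n be sets each of which locally divides H. If the union W = W_1 ∪ ⋯ ∪ W_n satisfies H_i \ W ≠ ∅ for every i = 1, …, m, then W also locally divides H. -/

import Mathlib

open Dynamics

/-- Discrete uniformity on `Fin m`, compatible with its discrete topology. -/
instance (m : ℕ) : UniformSpace (Fin m) := ⊥

/-- The one-sided shift map on `Σ_m = {1,…,m}^ℕ`, modelled as `ℕ → Fin m`. -/
def shiftMap (m : ℕ) : (ℕ → Fin m) → (ℕ → Fin m) := fun a n => a (n + 1)

variable {X : Type*}

/-- `H = (H_1, …, H_m)` is an `m`-shift system for `f`: each `H i` is nonempty and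
`f(H_i) ⊇ H_1 ∪ ⋯ ∪ H_m` for every `i`. -/
def IsShiftSystem (f : X → X) {m : ℕ} (H : Fin m → Set X) : Prop :=
  (∀ i, (H i).Nonempty) ∧ ∀ i, (⋃ j, H j) ⊆ f '' H i

/-- A closed `m`-shift system: an `m`-shift system all of whose sets are closed. -/
def IsClosedShiftSystem [TopologicalSpace X] (f : X → X) {m : ℕ} (H : Fin m → Set X) : Prop :=
  IsShiftSystem f H ∧ ∀ i, IsClosed (H i)

/-- The itinerary set `It(x)` of a point `x`. -/
def itin (f : X → X) {m : ℕ} (H : Fin m → Set X) (x : X) : Set (ℕ → Fin m) :=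
  {a | ∀ i : ℕ, f^[i] x ∈ H (a i)}

/-- The itinerary set `It(S) = ⋃_{x ∈ S} It(x)` of a subset `S ⊆ X`. -/
def itinSet (f : X → X) {m : ℕ} (H : Fin m → Set X) (S : Set X) : Set (ℕ → Fin m) :=
  ⋃ x ∈ S, itin f H x

/-- The `n`-itinerary set `It_n(x)` of a point `x`. -/
def itinN (f : X → X) {m : ℕ} (H : Fin m → Set X) (n : ℕ) (x : X) : Set (Fin n → Fin m) :=
  {w | ∀ i : Fin n, f^[(i : ℕ)] x ∈ H (w i)}

/-- `A(n)`: the set of initial subwords of length `n` of elements of `A ⊆ Σ_m`. -/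
def initWords {m : ℕ} (A : Set (ℕ → Fin m)) (n : ℕ) : Set (Fin n → Fin m) :=
  (fun (a : ℕ → Fin m) (i : Fin n) => a (i : ℕ)) '' A

/-- `π(w) = ⋂_{i<n} f^{-i}(H_{w_i})` for a finite word `w`. -/
def piWord (f : X → X) {m n : ℕ} (H : Fin m → Set X) (w : Fin n → Fin m) : Set X :=
  ⋂ i : Fin n, f^[(i : ℕ)] ⁻¹' H (w i)

/-- `π(α) = ⋂_{i≥0} f^{-i}(H_{α_i})` for a sequence `α ∈ Σ_m`. -/
def piSeq (f : X → X) {m : ℕ} (H : Fin m → Set X) (α : ℕ → Fin m) : Set X :=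
  ⋂ i : ℕ, f^[i] ⁻¹' H (α i)

/-- `π(A) = ⋃_{w ∈ A} π(w)` for a set `A` of `n`-words. -/
def piWordSet (f : X → X) {m n : ℕ} (H : Fin m → Set X) (A : Set (Fin n → Fin m)) : Set X :=
  ⋃ w ∈ A, piWord f H w

/-- `π(A) = ⋃_{α ∈ A} π(α)` for a set `A ⊆ Σ_m` of sequences. -/
def piSeqSet (f : X → X) {m : ℕ} (H : Fin m → Set X) (A : Set (ℕ → Fin m)) : Set X :=
  ⋃ α ∈ A, piSeq f H α

/-- The center `C(H) = ⋂ i, H i`. -/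
def centerSet {m : ℕ} (H : Fin m → Set X) : Set X := ⋂ i, H i

/-- The core `Z_0(H) = ⋂_{k≥0} f^{-k}(C(H))`. -/
def coreSet (f : X → X) {m : ℕ} (H : Fin m → Set X) : Set X :=
  ⋂ k : ℕ, f^[k] ⁻¹' centerSet H

/-- The domain `D(H) = ⋂_{k≥0} f^{-k}(ℍ)` where `ℍ = H_1 ∪ ⋯ ∪ H_m`. -/
def domainSet (f : X → X) {m : ℕ} (H : Fin m → Set X) : Set X :=
  ⋂ k : ℕ, f^[k] ⁻¹' (⋃ j, H j)

/-- The kernel `Ker(H)`: points lying in at least two of the sets `H i`. -/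
def kernelSet {m : ℕ} (H : Fin m → Set X) : Set X :=
  {x | ∃ i j, i ≠ j ∧ x ∈ H i ∧ x ∈ H j}

/-- The kernel of `H` is eventually countable: some image `f^j(Ker(H))` is countable. -/
def EventuallyCountableKernel (f : X → X) {m : ℕ} (H : Fin m → Set X) : Prop :=
  ∃ j : ℕ, (f^[j] '' kernelSet H).Countable

/-- `H` is nontrivial: `H_i \ Z_0(H) ≠ ∅` for every `i`. -/
def IsNontrivialShiftSystem (f : X → X) {m : ℕ} (H : Fin m → Set X) : Prop :=
  ∀ i, (H i \ coreSet f H).Nonempty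

/-- A minimal set of `f`: a nonempty closed invariant set with no proper nonempty closed
invariant subset. -/
def IsMinimalSet [TopologicalSpace X] (f : X → X) (M : Set X) : Prop :=
  M.Nonempty ∧ IsClosed M ∧ f '' M ⊆ M ∧
    ∀ M' : Set X, M' ⊆ M → M'.Nonempty → IsClosed M' → f '' M' ⊆ M' → M' = M

/-- A shift-minimal subset of `Σ_m`. -/
def IsShiftMinimal {m : ℕ} (Γ : Set (ℕ → Fin m)) : Prop :=
  Γ.Nonempty ∧ IsClosed Γ ∧ shiftMap m '' Γ ⊆ Γ ∧
    ∀ Γ' : Set (ℕ → Fin m), Γ' ⊆ Γ → Γ'.Nonempty → IsClosed Γ' →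
      shiftMap m '' Γ' ⊆ Γ' → Γ' = Γ

/-- A periodic orbit of `f`. -/
def IsPeriodicOrbit (f : X → X) (P : Set X) : Prop :=
  ∃ (x : X) (n : ℕ), 0 < n ∧ f^[n] x = x ∧ P = Set.range fun i => f^[i] x

/-- The virtual entropy `ĥ(S)`: the topological entropy of the shift restricted to `It(S)`. -/
noncomputable def virtualEntropy (f : X → X) {m : ℕ} (H : Fin m → Set X) (S : Set X) : EReal :=
  coverEntropy (shiftMap m) (itinSet f H S)

/-- `W` locally divides the shift system `H`. -/
def LocallyDivides [TopologicalSpace X] (f : X → X) {m : ℕ} (H : Fin m → Set X)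
    (W : Set X) : Prop :=
  f '' W ⊆ W ∧ (∀ i, (H i \ W).Nonempty) ∧
    ∃ Λ : Set (ℕ → Fin m), IsClosed Λ ∧ shiftMap m '' Λ ⊆ Λ ∧
      coverEntropy (shiftMap m) Λ < (Real.log m : EReal) ∧
      ∃ V ∈ nhdsSet W, ∀ (x : X) (n : ℕ), 1 ≤ n →
        (∀ i < n, f^[i] x ∈ V \ W) → itinN f H n x ⊆ initWords Λ n

/-- The ω-limit set of `x` under `f`. -/
def omegaLimitSet [TopologicalSpace X] (f : X → X) (x : X) : Set X :=
  ⋂ N : ℕ, closure (Set.range fun n : ℕ => f^[N + n] x)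

/-- `limsup` of a sequence of sets: `⋂_{k≥1} ⋃_{i≥k} A_i`. -/
def limsupSets {β : Type*} (A : ℕ → Set β) : Set β :=
  ⋂ k : ℕ, ⋃ i : ℕ, ⋃ _ : k ≤ i, A i

namespace LDAux

open Set Filter Uniformity ENNReal

instance (m : ℕ) : DiscreteTopology (Fin m) := ⟨rfl⟩

def cylEnt (m p : ℕ) : Set ((ℕ → Fin m) × (ℕ → Fin m)) := {ρ | ∀ i < p, ρ.1 i = ρ.2 i}

lemma cylEnt_mem (m p : ℕ) : cylEnt m p ∈ 𝓤 (ℕ → Fin m) := by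
  have : cylEnt m p = ⋂ i ∈ Finset.range p,
      (fun ρ : (ℕ → Fin m) × (ℕ → Fin m) => (ρ.1 i, ρ.2 i)) ⁻¹' SetRel.id := by
    ext ρ; simp [cylEnt, SetRel.id]
  rw [this]
  apply (Filter.biInter_mem (Finset.range p).finite_toSet).2
  intro i _
  rw [Pi.uniformity]
  apply Filter.mem_iInf_of_mem i
  exact Filter.preimage_mem_comap (by rw [bot_uniformity]; exact Filter.mem_principal_self SetRel.id)

instance cylEnt_symm (m p : ℕ) : SetRel.IsSymm (cylEnt m p) :=
  ⟨fun _ _ h i hi => (h i hi).symm⟩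

lemma cylEnt_comp (m p : ℕ) : SetRel.comp (cylEnt m p) (cylEnt m p) = cylEnt m p := by
  ext ρ
  constructor
  · rintro ⟨z, h1, h2⟩ i hi
    exact (h1 i hi).trans (h2 i hi)
  · intro h
    exact ⟨ρ.2, h, fun i _ => rfl⟩

lemma shift_iter (m : ℕ) (k : ℕ) (α : ℕ → Fin m) (i : ℕ) : (shiftMap m)^[k] α i = α (k + i) := by
  induction k generalizing α i with
  | zero => simp
  | succ k ih =>
    rw [Function.iterate_succ_apply, ih]
    simp only [shiftMap]
    congr 1
    ring

lemma mem_ball_cyl {m p n : ℕ} {x y : ℕ → Fin m} :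
    y ∈ UniformSpace.ball x (dynEntourage (shiftMap m) (cylEnt m p) n) ↔
      ∀ k < n, ∀ i < p, x (k + i) = y (k + i) := by
  rw [mem_ball_dynEntourage]
  constructor
  · intro h k hk i hi
    have h2 := h k hk
    simp only [UniformSpace.ball, mem_preimage, cylEnt, mem_setOf_eq, shift_iter] at h2
    exact h2 i hi
  · intro h k hk
    simp only [UniformSpace.ball, mem_preimage, cylEnt, mem_setOf_eq, shift_iter]
    exact fun i hi => h k hk i hi


open ENNReal

lemma words_small {m : ℕ} (hm : 1 ≤ m) {Γ : Set (ℕ → Fin m)} {t : ℝ}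
    (h : coverEntropy (shiftMap m) Γ < (t : EReal)) :
    ∃ L0 : ℕ, 1 ≤ L0 ∧ ∀ L, L0 ≤ L → ((initWords Γ L).ncard : ℝ) ≤ Real.exp (t * L) := by
  have hE : coverEntropyEntourage (shiftMap m) Γ (cylEnt m 1) < (t : EReal) :=
    (coverEntropyEntourage_le_coverEntropy _ _ (cylEnt_mem m 1)).trans_lt h
  have hev := Filter.eventually_lt_of_limsup_lt hE
  rw [Filter.eventually_atTop] at hev
  obtain ⟨n0, hn0⟩ := hev
  refine ⟨max n0 1, le_max_right _ _, fun L hL => ?_⟩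
  have hL1 : 1 ≤ L := le_trans (le_max_right _ _) hL
  have hlt := hn0 L (le_trans (le_max_left _ _) hL)
  -- mincard is finite
  have hLpos : (0:EReal) < (L : ℕ) := by exact_mod_cast Nat.pos_of_ne_zero (by omega)
  have hLne : ((L : ℕ) : EReal) ≠ ⊤ := by simp [EReal.natCast_ne_top]
  have hfin : coverMincard (shiftMap m) Γ (cylEnt m 1) L < ⊤ := by
    by_contra hcon
    rw [not_lt, top_le_iff] at hcon
    beta_reduce at hlt
    rw [hcon] at hlt
    have : (⊤ : EReal) / (L : ℕ) = ⊤ :=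
      EReal.top_div_of_pos_ne_top hLpos hLne
    simp only [ENat.toENNReal_top, ENNReal.log_top, this] at hlt
    exact (not_top_lt hlt)
  obtain ⟨s, s_cover, s_card⟩ := (coverMincard_finite_iff _ _ _ _).1 hfin
  -- injection from words into the cover
  have hex : ∀ w ∈ initWords Γ L, ∃ x, x ∈ (s : Set (ℕ → Fin m)) ∧ ∀ i : Fin L, x (i : ℕ) = w i := by
    rintro w ⟨γ, hγ, rfl⟩
    have := s_cover hγ
    obtain ⟨x, hxs, hball⟩ := this
    refine ⟨x, hxs, fun i => ?_⟩
    have := (mem_ball_cyl (x := γ) (y := x)).1 hball (i : ℕ) i.2 0 Nat.one_pos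
    simpa using this.symm
  classical
  set F : (Fin L → Fin m) → (ℕ → Fin m) := fun w =>
    if h : ∃ x, x ∈ (s : Set (ℕ → Fin m)) ∧ ∀ i : Fin L, x (i : ℕ) = w i then h.choose
    else (fun _ => ⟨0, hm⟩) with hF
  have hFspec : ∀ w ∈ initWords Γ L,
      F w ∈ (s : Set (ℕ → Fin m)) ∧ ∀ i : Fin L, (F w) (i : ℕ) = w i := by
    intro w hw
    rw [hF]
    simp only [dif_pos (hex w hw)]
    exact (hex w hw).choose_spec
  have hcard : (initWords Γ L).ncard ≤ s.card := by
    rw [← Set.ncard_coe_finset]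
    refine Set.ncard_le_ncard_of_injOn F (fun w hw => (hFspec w hw).1) ?_ s.finite_toSet
    intro w hw w' hw' hww
    funext i
    rw [← (hFspec w hw).2 i, ← (hFspec w' hw').2 i, hww]
  -- turn the entropy bound into a cardinality bound
  have h2 : ENNReal.log (coverMincard (shiftMap m) Γ (cylEnt m 1) L) ≤ ((L:ℕ) : EReal) * t := by
    rw [← EReal.div_le_iff_le_mul hLpos hLne]
    exact hlt.le
  have h3 : ENNReal.log (((initWords Γ L).ncard : ℕ∞) : ℝ≥0∞) ≤ ((t * L : ℝ) : EReal) := by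
    refine le_trans (ENNReal.log_monotone ?_) (h2.trans_eq ?_)
    · rw [← s_card]
      exact_mod_cast hcard
    · rw [mul_comm, EReal.coe_mul]; norm_cast
  have h4 : (((initWords Γ L).ncard : ℕ∞) : ℝ≥0∞) ≤ ENNReal.ofReal (Real.exp (t * L)) := by
    rw [← ENNReal.log_le_log_iff, ENNReal.log_ofReal_of_pos (Real.exp_pos _), Real.log_exp]
    exact h3
  have h5 : (((initWords Γ L).ncard : ℕ∞) : ℝ≥0∞).toReal ≤ Real.exp (t * L) := by
    refine le_trans (ENNReal.toReal_mono ?_ h4) ?_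
    · exact ENNReal.ofReal_ne_top
    · rw [ENNReal.toReal_ofReal (Real.exp_pos _).le]
  simpa only [ENat.toENNReal_coe, ENNReal.toReal_natCast] using h5


open ENNReal

lemma exists_cyl_subset {m : ℕ} {U : Set ((ℕ → Fin m) × (ℕ → Fin m))} (hU : U ∈ 𝓤 (ℕ → Fin m)) :
    ∃ p, 1 ≤ p ∧ cylEnt m p ⊆ U := by
  rw [Pi.uniformity] at hU
  rw [Filter.mem_iInf] at hU
  obtain ⟨I, hIfin, V, hV, rfl⟩ := hU
  obtain ⟨b, hb⟩ := hIfin.bddAbove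
  refine ⟨b + 1, by omega, ?_⟩
  intro ρ hρ
  rw [mem_iInter]
  intro i
  have h2 := hV i
  rw [Filter.mem_comap] at h2
  obtain ⟨w, hw, hsub⟩ := h2
  rw [bot_uniformity, Filter.mem_principal] at hw
  apply hsub
  apply hw
  have : (i : ℕ) ≤ b := hb i.2
  exact hρ (i : ℕ) (by omega)

lemma entropy_le {m : ℕ} (hm : 1 ≤ m) {Γ : Set (ℕ → Fin m)}
    (hinv : MapsTo (shiftMap m) Γ Γ) {c K : ℝ} (hK : 1 ≤ K)
    (hword : ∀ L, 1 ≤ L → ((initWords Γ L).ncard : ℝ) ≤ K * Real.exp (c * L)) :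
    coverEntropy (shiftMap m) Γ ≤ (c : EReal) := by
  classical
  refine iSup₂_le fun U hU => ?_
  obtain ⟨p, hp, hpU⟩ := exists_cyl_subset hU
  by_contra hcon
  rw [not_le] at hcon
  obtain ⟨y, hcy, hyE⟩ := EReal.exists_between_coe_real hcon
  have hcy' : c < y := by exact_mod_cast hcy
  set ε : ℝ := y - c with hε
  have hεpos : 0 < ε := by linarith
  set n : ℕ := max 1 (Nat.ceil ((Real.log K + c * p) / ε)) with hn
  have hn1 : 1 ≤ n := le_max_left _ _
  have hnp : 1 ≤ n + p := by omega
  -- construct a dynamical cover from the words of length n + p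
  have hex : ∀ w : Fin (n + p) → Fin m, w ∈ initWords Γ (n + p) →
      ∃ γ, γ ∈ Γ ∧ ∀ i : Fin (n + p), γ (i : ℕ) = w i := by
    rintro w ⟨γ, hγ, rfl⟩
    exact ⟨γ, hγ, fun i => rfl⟩
  set g : (Fin (n + p) → Fin m) → (ℕ → Fin m) := fun w =>
    if h : ∃ γ, γ ∈ Γ ∧ ∀ i : Fin (n + p), γ (i : ℕ) = w i then h.choose
    else (fun _ => ⟨0, hm⟩) with hg
  have hgspec : ∀ w ∈ initWords Γ (n + p),
      g w ∈ Γ ∧ ∀ i : Fin (n + p), (g w) (i : ℕ) = w i := by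
    intro w hw
    rw [hg]
    simp only [dif_pos (hex w hw)]
    exact (hex w hw).choose_spec
  set s : Finset (ℕ → Fin m) := ((initWords Γ (n + p)).toFinite.toFinset).image g with hs
  have hcover : IsDynCoverOf (shiftMap m) Γ (cylEnt m p) n (s : Set (ℕ → Fin m)) := by
    intro γ hγ
    set w : Fin (n + p) → Fin m := fun i => γ (i : ℕ) with hwdef
    have hw : w ∈ initWords Γ (n + p) := ⟨γ, hγ, rfl⟩
    refine ⟨g w, ?_, ?_⟩
    · simp only [hs, Finset.coe_image, mem_image, Set.Finite.coe_toFinset]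
      exact ⟨w, hw, rfl⟩
    · refine (mem_ball_cyl (x := γ) (y := g w)).2 ?_
      intro k hk i hi
      have := (hgspec w hw).2 ⟨k + i, by omega⟩
      exact this.symm
  have hcard : (s.card : ℝ) ≤ K * Real.exp (c * ((n : ℝ) + p)) := by
    have h0 := hword (n + p) hnp
    push_cast at h0
    refine le_trans ?_ h0
    have h1 : s.card ≤ (initWords Γ (n + p)).ncard := by
      refine le_trans (Finset.card_image_le) ?_
      rw [Set.ncard_eq_toFinset_card _ (initWords Γ (n + p)).toFinite]
    exact_mod_cast h1
  -- entropy estimate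
  have hE1 : coverEntropyEntourage (shiftMap m) Γ U
      ≤ coverEntropyEntourage (shiftMap m) Γ (cylEnt m p) :=
    coverEntropyEntourage_antitone _ _ hpU
  have hE2 := IsDynCoverOf.coverEntropyEntourage_le_log_card_div hinv
    (show n ≠ 0 by omega) hcover
  rw [cylEnt_comp] at hE2
  -- bound the log term
  have hsy : (s.card : ℝ) ≤ Real.exp (n * y) := by
    refine hcard.trans ?_
    have heq : K * Real.exp (c * ((n : ℝ) + p)) = Real.exp (Real.log K + c * ((n:ℝ) + p)) := by
      rw [Real.exp_add, Real.exp_log (by linarith)]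
    rw [heq]
    apply Real.exp_le_exp.2
    have hnceil : ((Real.log K + c * p) / ε) ≤ (n : ℝ) :=
      le_trans (Nat.le_ceil _) (by exact_mod_cast le_max_right 1 _)
    have hkey : Real.log K + c * p ≤ n * ε := by
      rcases le_or_gt (Real.log K + c * p) 0 with h | h
      · have : (0:ℝ) ≤ n * ε := by positivity
        linarith
      · rw [div_le_iff₀ hεpos] at hnceil
        linarith
    have hy : y = c + ε := by rw [hε]; ring
    rw [hy]
    nlinarith [hkey]
  have hlog : ENNReal.log (s.card : ℝ≥0∞) ≤ (((n : ℝ) * y : ℝ) : EReal) := by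
    have h4 : (s.card : ℝ≥0∞) ≤ ENNReal.ofReal (Real.exp (n * y)) := by
      rw [← ENNReal.ofReal_natCast]
      exact ENNReal.ofReal_le_ofReal hsy
    refine le_trans (ENNReal.log_monotone h4) ?_
    rw [ENNReal.log_ofReal_of_pos (Real.exp_pos _), Real.log_exp]
  have hnpos : (0:EReal) < (n : ℕ) := by exact_mod_cast Nat.pos_of_ne_zero (by omega)
  have hnne : ((n : ℕ) : EReal) ≠ ⊤ := by simp [EReal.natCast_ne_top]
  have hE3 : coverEntropyEntourage (shiftMap m) Γ U ≤ (y : EReal) := by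
    refine le_trans (hE1.trans hE2) ?_
    rw [EReal.div_le_iff_le_mul hnpos hnne]
    refine hlog.trans_eq ?_
    rw [EReal.coe_mul]
    norm_cast
  exact absurd (lt_of_le_of_lt hE3 hyE) (lt_irrefl _)


lemma words_le_pow {m : ℕ} (Γ : Set (ℕ → Fin m)) (L : ℕ) :
    (initWords Γ L).ncard ≤ m ^ L := by
  refine le_trans (Set.ncard_le_ncard (Set.subset_univ _) (Set.finite_univ)) ?_
  rw [Set.ncard_univ, Nat.card_eq_fintype_card, Fintype.card_fun]
  simp

lemma exists_unif_bound {m n : ℕ} (hm : 1 ≤ m) {Λs : Fin n → Set (ℕ → Fin m)} {t : ℝ}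
    (h : ∀ j, coverEntropy (shiftMap m) (Λs j) < (t : EReal)) :
    ∃ C : ℝ, 1 ≤ C ∧ ∀ j L, ((initWords (Λs j) L).ncard : ℝ) ≤ C * Real.exp (t * L) := by
  have hch : ∀ j, ∃ L0 : ℕ, 1 ≤ L0 ∧ ∀ L, L0 ≤ L →
      ((initWords (Λs j) L).ncard : ℝ) ≤ Real.exp (t * L) := fun j => words_small hm (h j)
  choose L0 hL01 hL0 using hch
  set M : ℕ := (Finset.univ.sup L0) + 1 with hM
  set C : ℝ := (m : ℝ) ^ M * Real.exp (|t| * M) with hC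
  have hC1 : 1 ≤ C := by
    have h1 : (1:ℝ) ≤ (m:ℝ) ^ M := one_le_pow₀ (by exact_mod_cast hm)
    have h2 : (1:ℝ) ≤ Real.exp (|t| * M) := by
      rw [Real.one_le_exp_iff]
      have : (0:ℝ) ≤ |t| := abs_nonneg t
      positivity
    nlinarith
  refine ⟨C, hC1, fun j L => ?_⟩
  rcases le_or_gt (L0 j) L with hL | hL
  · refine le_trans (hL0 j L hL) ?_
    nlinarith [Real.exp_pos (t * L), hC1]
  · -- L < L0 j ≤ M
    have hLM : L ≤ M := by
      have := Finset.le_sup (Finset.mem_univ j) (f := L0)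
      omega
    have h1 : ((initWords (Λs j) L).ncard : ℝ) ≤ (m:ℝ) ^ M := by
      have := words_le_pow (Λs j) L
      have h2 : (m:ℕ) ^ L ≤ m ^ M := Nat.pow_le_pow_right (by omega) hLM
      exact_mod_cast le_trans this h2
    refine h1.trans ?_
    rw [hC, mul_assoc, ← Real.exp_add]
    have h3 : (1:ℝ) ≤ Real.exp (|t| * M + t * L) := by
      rw [Real.one_le_exp_iff]
      have habs : -(t * L) ≤ |t| * M := by
        calc -(t * L) ≤ |t| * L := by
              rw [← neg_mul]
              exact mul_le_mul_of_nonneg_right (neg_le_abs t) (by positivity)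
          _ ≤ |t| * M := by
              apply mul_le_mul_of_nonneg_left _ (abs_nonneg t)
              exact_mod_cast hLM
      linarith
    nlinarith [pow_pos (show (0:ℝ) < m by exact_mod_cast hm) M]

lemma exists_goodN (D δ : ℝ) (hD : 1 ≤ D) (hδ : 0 < δ) :
    ∃ N : ℕ, 1 ≤ N ∧ Real.log (((N:ℝ) + 1) * D) < δ * ((N:ℝ) + 1) := by
  set N : ℕ := max 1 (Nat.ceil (4 * D / δ ^ 2)) with hN
  refine ⟨N, le_max_left _ _, ?_⟩
  set y : ℝ := ((N:ℝ) + 1) * D with hy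
  have hy1 : 1 ≤ y := by
    have : (0:ℝ) ≤ (N:ℝ) := Nat.cast_nonneg N
    nlinarith
  have hypos : 0 < y := by linarith
  have hlog : Real.log y ≤ 2 * Real.sqrt y - 2 := by
    have h1 : Real.log (Real.sqrt y) ≤ Real.sqrt y - 1 :=
      Real.log_le_sub_one_of_pos (Real.sqrt_pos.2 hypos)
    have h2 : Real.log (Real.sqrt y) = Real.log y / 2 := Real.log_sqrt hypos.le
    linarith
  have hsq : Real.sqrt y ≤ δ * ((N:ℝ) + 1) / 2 := by
    rw [show δ * ((N:ℝ) + 1) / 2 = Real.sqrt ((δ * ((N:ℝ)+1) / 2)^2) from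
      (Real.sqrt_sq (by positivity)).symm]
    apply Real.sqrt_le_sqrt
    have hceil : 4 * D / δ ^ 2 ≤ (N:ℝ) :=
      le_trans (Nat.le_ceil _) (by exact_mod_cast le_max_right 1 _)
    have h4 : 4 * D ≤ δ^2 * (N:ℝ) := by
      rw [div_le_iff₀ (by positivity)] at hceil
      linarith
    have h5 : (N:ℝ) ≤ (N:ℝ) + 1 := by linarith
    have h6 : ((N:ℝ)+1) * (4 * D) ≤ ((N:ℝ)+1) * (δ^2 * ((N:ℝ)+1)) := by
      have := mul_le_mul_of_nonneg_left h4 (show (0:ℝ) ≤ (N:ℝ)+1 by positivity)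
      nlinarith [sq_nonneg δ, Nat.cast_nonneg (α := ℝ) N]
    nlinarith
  nlinarith [hlog, hsq]


variable {m n : ℕ}

/-- A window of length `N+1` starting at `k` is good: it is a `Λ_j`-word, or the
concatenation of a `Λ_j`-word and the start of a `Λ_{j'}`-word. -/
def GoodWin (Λs : Fin n → Set (ℕ → Fin m)) (N : ℕ) (α : ℕ → Fin m) (k : ℕ) : Prop :=
  ∃ p : ℕ, ∃ j j' : Fin n, 1 ≤ p ∧ p ≤ N + 1 ∧
    (∃ γ ∈ Λs j, ∀ i < p, α (k + i) = γ i) ∧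
    (p = N + 1 ∨ ∃ γ ∈ Λs j', ∀ i, p ≤ i → i < N + 1 → α (k + i) = γ (i - p))

def bigLam (Λs : Fin n → Set (ℕ → Fin m)) (N : ℕ) : Set (ℕ → Fin m) :=
  {α | ∀ k, GoodWin Λs N α k}

lemma goodWin_congr {Λs : Fin n → Set (ℕ → Fin m)} {N : ℕ} {α α' : ℕ → Fin m} {k k' : ℕ}
    (h : ∀ i < N + 1, α (k + i) = α' (k' + i)) (hg : GoodWin Λs N α k) :
    GoodWin Λs N α' k' := by
  obtain ⟨p, j, j', hp1, hp2, ⟨γ, hγ, hpre⟩, hsuf⟩ := hg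
  refine ⟨p, j, j', hp1, hp2, ⟨γ, hγ, fun i hi => ?_⟩, ?_⟩
  · rw [← h i (by omega)]; exact hpre i hi
  · rcases hsuf with h1 | ⟨γ', hγ', hs⟩
    · exact Or.inl h1
    · exact Or.inr ⟨γ', hγ', fun i h1 h2 => by rw [← h i (by omega)]; exact hs i h1 h2⟩

lemma bigLam_mapsTo (Λs : Fin n → Set (ℕ → Fin m)) (N : ℕ) :
    Set.MapsTo (shiftMap m) (bigLam Λs N) (bigLam Λs N) := by
  intro α hα k
  refine goodWin_congr (α := α) (k := k + 1) (fun i _ => ?_) (hα (k + 1))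
  simp only [shiftMap]
  congr 1
  omega

lemma bigLam_closed (Λs : Fin n → Set (ℕ → Fin m)) (N : ℕ) :
    IsClosed (bigLam Λs N) := by
  rw [← isOpen_compl_iff]
  rw [isOpen_iff_forall_mem_open]
  intro α hα
  simp only [mem_compl_iff, bigLam, mem_setOf_eq, not_forall] at hα
  obtain ⟨k, hk⟩ := hα
  refine ⟨{α' | ∀ i < N + 1, α' (k + i) = α (k + i)}, ?_, ?_, ?_⟩
  · intro α' hα'
    simp only [mem_compl_iff, bigLam, mem_setOf_eq, not_forall]
    exact ⟨k, fun hgood => hk (goodWin_congr (α := α') (α' := α) (k := k) (k' := k) hα' hgood)⟩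
  · have : {α' : ℕ → Fin m | ∀ i < N + 1, α' (k + i) = α (k + i)} =
        ⋂ i ∈ Finset.range (N + 1), (fun α' : ℕ → Fin m => α' (k + i)) ⁻¹' {α (k + i)} := by
      ext α'
      simp [Finset.mem_range]
    rw [this]
    refine isOpen_biInter_finset fun i _ => ?_
    exact (continuous_apply (k + i)).isOpen_preimage _ (isOpen_discrete _)
  · intro i _
    rfl

/-- The finite-word version of the window condition. -/
def Aword (Λs : Fin n → Set (ℕ → Fin m)) (N : ℕ) : Set (Fin (N + 1) → Fin m) :=
  {u | ∃ p : ℕ, ∃ j j' : Fin n, 1 ≤ p ∧ p ≤ N + 1 ∧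
    (∃ γ ∈ Λs j, ∀ i : Fin (N + 1), (i : ℕ) < p → u i = γ (i : ℕ)) ∧
    (p = N + 1 ∨ ∃ γ ∈ Λs j', ∀ i : Fin (N + 1), p ≤ (i : ℕ) → u i = γ ((i : ℕ) - p))}

lemma window_mem_Aword {Λs : Fin n → Set (ℕ → Fin m)} {N : ℕ} {α : ℕ → Fin m}
    (hα : α ∈ bigLam Λs N) (k : ℕ) :
    (fun i : Fin (N + 1) => α (k + (i : ℕ))) ∈ Aword Λs N := by
  obtain ⟨p, j, j', hp1, hp2, ⟨γ, hγ, hpre⟩, hsuf⟩ := hα k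
  refine ⟨p, j, j', hp1, hp2, ⟨γ, hγ, fun i hi => hpre (i : ℕ) hi⟩, ?_⟩
  rcases hsuf with h1 | ⟨γ', hγ', hs⟩
  · exact Or.inl h1
  · exact Or.inr ⟨γ', hγ', fun i hi => hs (i : ℕ) hi i.2⟩


lemma ncard_biUnion_le {ι β : Type*} [Fintype β] (s : Finset ι) (f : ι → Set β) :
    (⋃ a ∈ s, f a).ncard ≤ ∑ a ∈ s, (f a).ncard := by
  classical
  induction s using Finset.induction_on with
  | empty => simp
  | insert _ _ h ih =>
    rename_i a s'
    rw [Finset.set_biUnion_insert, Finset.sum_insert h]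
    exact le_trans (Set.ncard_union_le _ _) (by omega)

def cell {m n : ℕ} (Λs : Fin n → Set (ℕ → Fin m)) (N p : ℕ) (j j' : Fin n) :
    Set (Fin (N + 1) → Fin m) :=
  {u | (∃ γ ∈ Λs j, ∀ i : Fin (N + 1), (i : ℕ) < p → u i = γ (i : ℕ)) ∧
       (p = N + 1 ∨ ∃ γ ∈ Λs j', ∀ i : Fin (N + 1), p ≤ (i : ℕ) → u i = γ ((i : ℕ) - p))}

lemma Aword_subset_cells {m n : ℕ} (Λs : Fin n → Set (ℕ → Fin m)) (N : ℕ) :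
    Aword Λs N ⊆ ⋃ q ∈ (Finset.univ : Finset (Fin (N + 1) × Fin n × Fin n)),
      cell Λs N ((q.1 : ℕ) + 1) q.2.1 q.2.2 := by
  rintro u ⟨p, j, j', hp1, hp2, hpre, hsuf⟩
  simp only [mem_iUnion]
  exact ⟨(⟨p - 1, by omega⟩, j, j'), Finset.mem_univ _,
    by
      have hpp : (p - 1) + 1 = p := by omega
      simp only [cell, mem_setOf_eq]
      rw [hpp]
      exact ⟨hpre, hsuf⟩⟩

lemma cell_ncard_le {m n : ℕ} (Λs : Fin n → Set (ℕ → Fin m)) (N p : ℕ) (hp : p ≤ N)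
    (j j' : Fin n) :
    (cell Λs N p j j').ncard ≤
      (initWords (Λs j) p).ncard * (initWords (Λs j') (N + 1 - p)).ncard := by
  classical
  have hkey : ∀ u ∈ cell Λs N p j j',
      (∃ γ ∈ Λs j, ∀ i : Fin (N + 1), (i : ℕ) < p → u i = γ (i : ℕ)) ∧
      (∃ γ ∈ Λs j', ∀ i : Fin (N + 1), p ≤ (i : ℕ) → u i = γ ((i : ℕ) - p)) := by
    rintro u ⟨h1, h2⟩
    rcases h2 with h2 | h2
    · omega
    · exact ⟨h1, h2⟩
  set F : (Fin (N + 1) → Fin m) → (Fin p → Fin m) × (Fin (N + 1 - p) → Fin m) := fun u =>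
    ((fun i : Fin p => u ⟨(i : ℕ), by omega⟩), (fun i : Fin (N + 1 - p) => u ⟨p + (i : ℕ), by omega⟩))
    with hF
  have hmaps : ∀ u ∈ cell Λs N p j j',
      F u ∈ (initWords (Λs j) p) ×ˢ (initWords (Λs j') (N + 1 - p)) := by
    intro u hu
    obtain ⟨⟨γ, hγ, hpre⟩, ⟨γ', hγ', hsuf⟩⟩ := hkey u hu
    constructor
    · exact ⟨γ, hγ, funext fun i => (hpre ⟨(i : ℕ), by omega⟩ i.2).symm⟩
    · refine ⟨γ', hγ', funext fun i => ?_⟩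
      have := hsuf ⟨p + (i : ℕ), by omega⟩ (by simp)
      simp only at this
      rw [hF]
      simp only
      rw [this]
      congr 1
      omega
  have hinj : Set.InjOn F (cell Λs N p j j') := by
    intro u hu u' hu' heq
    funext i
    rcases lt_or_ge (i : ℕ) p with hi | hi
    · have := congrFun (congrArg Prod.fst heq) ⟨(i : ℕ), hi⟩
      simpa [hF, Fin.eta] using this
    · have := congrFun (congrArg Prod.snd heq) ⟨(i : ℕ) - p, by omega⟩
      simp only [hF] at this
      have hix : (⟨p + ((i : ℕ) - p), by omega⟩ : Fin (N + 1)) = i := by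
        apply Fin.ext
        simp
        omega
      rwa [hix] at this
  have := Set.ncard_le_ncard_of_injOn F hmaps hinj (Set.toFinite _)
  refine this.trans ?_
  rw [← Nat.card_coe_set_eq, ← Nat.card_coe_set_eq, ← Nat.card_coe_set_eq,
    Nat.card_congr (Equiv.Set.prod _ _), Nat.card_prod]

lemma cell_ncard_top {m n : ℕ} (Λs : Fin n → Set (ℕ → Fin m)) (N : ℕ) (j j' : Fin n) :
    (cell Λs N (N + 1) j j').ncard ≤ (initWords (Λs j) (N + 1)).ncard := by
  refine Set.ncard_le_ncard ?_ (Set.toFinite _)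
  rintro u ⟨⟨γ, hγ, hpre⟩, -⟩
  exact ⟨γ, hγ, funext fun i => (hpre i i.2).symm⟩

lemma bigLam_words {m n : ℕ} (hm : 1 ≤ m) (Λs : Fin n → Set (ℕ → Fin m)) (N L : ℕ) :
    (initWords (bigLam Λs N) L).ncard ≤ (Aword Λs N).ncard ^ (L / (N + 1) + 1) := by
  classical
  set K := L / (N + 1) + 1 with hK
  have hex : ∀ w : Fin L → Fin m, w ∈ initWords (bigLam Λs N) L →
      ∃ α, α ∈ bigLam Λs N ∧ ∀ i : Fin L, α (i : ℕ) = w i := by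
    rintro w ⟨α, hα, rfl⟩
    exact ⟨α, hα, fun i => rfl⟩
  set g : (Fin L → Fin m) → (ℕ → Fin m) := fun w =>
    if h : ∃ α, α ∈ bigLam Λs N ∧ ∀ i : Fin L, α (i : ℕ) = w i then h.choose
    else (fun _ => ⟨0, hm⟩) with hg
  have hgspec : ∀ w ∈ initWords (bigLam Λs N) L,
      g w ∈ bigLam Λs N ∧ ∀ i : Fin L, (g w) (i : ℕ) = w i := by
    intro w hw
    rw [hg]
    simp only [dif_pos (hex w hw)]
    exact (hex w hw).choose_spec
  set F : (Fin L → Fin m) → (Fin K → (Fin (N + 1) → Fin m)) := fun w =>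
    fun s => fun i => (g w) ((s : ℕ) * (N + 1) + (i : ℕ)) with hFdef
  have hmaps : ∀ w ∈ initWords (bigLam Λs N) L,
      F w ∈ Set.pi Set.univ (fun _ : Fin K => Aword Λs N) := by
    intro w hw s _
    exact window_mem_Aword (hgspec w hw).1 _
  have hinj : Set.InjOn F (initWords (bigLam Λs N) L) := by
    intro w hw w' hw' heq
    funext i
    have hslt : (i : ℕ) / (N + 1) < K := by
      have h1 : (i : ℕ) / (N + 1) ≤ L / (N + 1) := Nat.div_le_div_right i.2.le
      omega
    have hrlt : (i : ℕ) % (N + 1) < N + 1 := Nat.mod_lt _ (by omega)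
    have hi : ((i : ℕ) / (N + 1)) * (N + 1) + (i : ℕ) % (N + 1) = (i : ℕ) := by
      rw [mul_comm]
      exact Nat.div_add_mod _ _
    have h1 := congrFun (congrFun heq ⟨(i : ℕ) / (N + 1), hslt⟩) ⟨(i : ℕ) % (N + 1), hrlt⟩
    simp only [hFdef] at h1
    rw [hi] at h1
    rw [← (hgspec w hw).2 i, ← (hgspec w' hw').2 i]
    exact h1
  have := Set.ncard_le_ncard_of_injOn F hmaps hinj (Set.toFinite _)
  refine this.trans ?_
  rw [← Nat.card_coe_set_eq, ← Nat.card_coe_set_eq,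
    Nat.card_congr (Equiv.Set.univPi (fun _ : Fin K => Aword Λs N)), Nat.card_pi]
  simp [Nat.card_coe_set_eq]


lemma exists_N_entropy {m n : ℕ} (hm : 1 ≤ m) (Λs : Fin n → Set (ℕ → Fin m))
    (hent : ∀ j, coverEntropy (shiftMap m) (Λs j) < (Real.log m : EReal)) :
    ∃ N : ℕ, 1 ≤ N ∧ coverEntropy (shiftMap m) (bigLam Λs N) < (Real.log m : EReal) := by
  classical
  -- choose an intermediate real growth rate t
  have hbot : (⊥ : EReal) < (Real.log m : EReal) := EReal.bot_lt_coe _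
  set S : EReal := Finset.univ.sup (fun j : Fin n => coverEntropy (shiftMap m) (Λs j)) with hS
  have hSlt : S < (Real.log m : EReal) := by
    rw [hS, Finset.sup_lt_iff hbot]
    exact fun j _ => hent j
  obtain ⟨t, hSt, htm⟩ := EReal.exists_between_coe_real hSlt
  have hentt : ∀ j, coverEntropy (shiftMap m) (Λs j) < (t : EReal) := fun j =>
    lt_of_le_of_lt (Finset.le_sup (f := fun j : Fin n => coverEntropy (shiftMap m) (Λs j)) (Finset.mem_univ j)) hSt
  have htm' : t < Real.log m := by exact_mod_cast htm
  obtain ⟨C, hC1, hCb⟩ := exists_unif_bound hm hentt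
  set δ : ℝ := Real.log m - t with hδdef
  have hδ : 0 < δ := by rw [hδdef]; linarith
  set D : ℝ := ((n : ℝ) ^ 2 + 1) * C ^ 2 with hD
  have hD1 : 1 ≤ D := by nlinarith [sq_nonneg (n : ℝ)]
  obtain ⟨N, hN1, hNlog⟩ := exists_goodN D δ hD1 hδ
  refine ⟨N, hN1, ?_⟩
  -- bound the number of admissible windows
  have hcell : ∀ q : Fin (N + 1) × Fin n × Fin n,
      ((cell Λs N ((q.1 : ℕ) + 1) q.2.1 q.2.2).ncard : ℝ) ≤ C ^ 2 * Real.exp (t * ((N : ℝ) + 1)) := by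
    intro q
    rcases eq_or_lt_of_le (Nat.succ_le_of_lt q.1.2) with hq | hq
    · -- p = N + 1
      have hq' : (q.1 : ℕ) + 1 = N + 1 := by omega
      rw [hq']
      have h1 := cell_ncard_top Λs N q.2.1 q.2.2
      have h2 := hCb q.2.1 (N + 1)
      have h3 : ((cell Λs N (N + 1) q.2.1 q.2.2).ncard : ℝ)
          ≤ C * Real.exp (t * ((N : ℝ) + 1)) := by
        refine le_trans ?_ (by exact_mod_cast h2)
        exact_mod_cast h1
      nlinarith [Real.exp_pos (t * ((N : ℝ) + 1)), hC1,
        (Nat.cast_nonneg (cell Λs N (N + 1) q.2.1 q.2.2).ncard : (0:ℝ) ≤ _)]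
    · -- p ≤ N
      set p : ℕ := (q.1 : ℕ) + 1 with hp
      have hpN : p ≤ N := by omega
      have h1 := cell_ncard_le Λs N p hpN q.2.1 q.2.2
      have h2 := hCb q.2.1 p
      have h3 := hCb q.2.2 (N + 1 - p)
      have h4 : ((initWords (Λs q.2.1) p).ncard : ℝ) *
          ((initWords (Λs q.2.2) (N + 1 - p)).ncard : ℝ)
          ≤ (C * Real.exp (t * p)) * (C * Real.exp (t * ((N : ℝ) + 1 - p))) := by
        have hc1 : ((initWords (Λs q.2.2) (N + 1 - p)).ncard : ℝ)
            ≤ C * Real.exp (t * ((N : ℝ) + 1 - p)) := by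
          refine h3.trans ?_
          have : ((N + 1 - p : ℕ) : ℝ) = (N : ℝ) + 1 - p := by
            push_cast [Nat.cast_sub (by omega : p ≤ N + 1)]
            ring
          rw [this]
        refine mul_le_mul h2 hc1 (Nat.cast_nonneg _) ?_
        positivity
      have h5 : (C * Real.exp (t * p)) * (C * Real.exp (t * ((N : ℝ) + 1 - p)))
          = C ^ 2 * Real.exp (t * ((N : ℝ) + 1)) := by
        have hee : Real.exp (t * (p:ℝ)) * Real.exp (t * ((N : ℝ) + 1 - p))
            = Real.exp (t * ((N : ℝ) + 1)) := by
          rw [← Real.exp_add]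
          congr 1
          ring
        rw [← hee]
        ring
      refine le_trans ?_ (le_of_eq h5)
      refine le_trans ?_ h4
      exact_mod_cast h1
  have hA : ((Aword Λs N).ncard : ℝ) ≤ ((N : ℝ) + 1) * D * Real.exp (t * ((N : ℝ) + 1)) := by
    have h1 : (Aword Λs N).ncard ≤
        ∑ q ∈ (Finset.univ : Finset (Fin (N + 1) × Fin n × Fin n)),
          (cell Λs N ((q.1 : ℕ) + 1) q.2.1 q.2.2).ncard :=
      le_trans (Set.ncard_le_ncard (Aword_subset_cells Λs N) (Set.toFinite _))
        (ncard_biUnion_le _ _)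
    have h2 : ((Aword Λs N).ncard : ℝ) ≤
        ∑ q ∈ (Finset.univ : Finset (Fin (N + 1) × Fin n × Fin n)),
          (((cell Λs N ((q.1 : ℕ) + 1) q.2.1 q.2.2).ncard : ℝ)) := by
      exact_mod_cast h1
    refine h2.trans ?_
    refine le_trans (Finset.sum_le_sum fun q _ => hcell q) ?_
    rw [Finset.sum_const, Finset.card_univ]
    simp only [Fintype.card_prod, Fintype.card_fin, nsmul_eq_mul]
    have hstep : (((N + 1) * (n * n) : ℕ) : ℝ) * C ^ 2 ≤ ((N : ℝ) + 1) * D := by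
      push_cast
      rw [hD]
      have hC2 : (0:ℝ) ≤ C ^ 2 := sq_nonneg C
      have hN0 : (0:ℝ) ≤ (N : ℝ) := Nat.cast_nonneg N
      nlinarith [sq_nonneg ((n:ℝ))]
    nlinarith [Real.exp_pos (t * ((N : ℝ) + 1)), hstep]
  -- split on whether there are any admissible windows at all
  rcases Nat.eq_zero_or_pos (Aword Λs N).ncard with hzero | hapos
  · have hempty : bigLam Λs N = ∅ := by
      rw [Set.eq_empty_iff_forall_notMem]
      intro α hα
      have h1 : (fun i : Fin (N + 1) => α (0 + (i : ℕ))) ∈ Aword Λs N := window_mem_Aword hα 0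
      have h2 : (Aword Λs N).Nonempty := ⟨_, h1⟩
      rw [← Set.ncard_pos (Set.toFinite _)] at h2
      omega
    rw [hempty, coverEntropy_empty]
    exact hbot
  · set a : ℕ := (Aword Λs N).ncard with ha
    set c : ℝ := Real.log a / ((N : ℝ) + 1) with hc
    have hla0 : 0 ≤ Real.log a := Real.log_natCast_nonneg a
    have hword : ∀ L, 1 ≤ L → ((initWords (bigLam Λs N) L).ncard : ℝ)
        ≤ (a : ℝ) * Real.exp (c * L) := by
      intro L _
      have h1 := bigLam_words hm Λs N L
      have h2 : ((initWords (bigLam Λs N) L).ncard : ℝ) ≤ (a : ℝ) ^ (L / (N + 1) + 1) := by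
        exact_mod_cast h1
      refine h2.trans ?_
      rw [pow_succ, mul_comm ((a:ℝ) ^ (L / (N + 1))) (a:ℝ)]
      refine mul_le_mul_of_nonneg_left ?_ (Nat.cast_nonneg a)
      have h3 : (a : ℝ) ^ (L / (N + 1)) = Real.exp (Real.log a * (L / (N + 1) : ℕ)) := by
        rw [mul_comm, Real.exp_nat_mul, Real.exp_log (by exact_mod_cast hapos)]
      rw [h3]
      apply Real.exp_le_exp.2
      have h4 : ((L / (N + 1) : ℕ) : ℝ) ≤ (L : ℝ) / ((N : ℝ) + 1) := by
        have := Nat.cast_div_le (α := ℝ) (m := L) (n := N + 1)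
        push_cast at this
        exact this
      calc Real.log a * ((L / (N + 1) : ℕ) : ℝ)
          ≤ Real.log a * ((L : ℝ) / ((N : ℝ) + 1)) :=
            mul_le_mul_of_nonneg_left h4 hla0
        _ = c * L := by rw [hc]; ring
    have hclt : c < Real.log m := by
      have h1 : Real.log a ≤ Real.log (((N : ℝ) + 1) * D * Real.exp (t * ((N : ℝ) + 1))) :=
        Real.log_le_log (by exact_mod_cast hapos) hA
      have h2 : Real.log (((N : ℝ) + 1) * D * Real.exp (t * ((N : ℝ) + 1)))
          = Real.log (((N : ℝ) + 1) * D) + t * ((N : ℝ) + 1) := by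
        rw [Real.log_mul (by positivity) (Real.exp_ne_zero _), Real.log_exp]
      have h3 : Real.log a < δ * ((N : ℝ) + 1) + t * ((N : ℝ) + 1) := by
        rw [h2] at h1
        linarith [hNlog]
      have h4 : δ * ((N : ℝ) + 1) + t * ((N : ℝ) + 1) = Real.log m * ((N : ℝ) + 1) := by
        rw [hδdef]; ring
      rw [hc, div_lt_iff₀ (by positivity)]
      rw [h4] at h3
      linarith
    have hKa : 1 ≤ (a : ℝ) := by exact_mod_cast hapos
    refine lt_of_le_of_lt (entropy_le hm (bigLam_mapsTo Λs N) hKa hword) ?_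
    exact_mod_cast hclt

end LDAux

/-- If each of `W_1, …, W_n` locally divides the closed `m`-shift system `H`, and the union
`W = W_1 ∪ ⋯ ∪ W_n` satisfies `H_i \ W ≠ ∅` for every `i`, then `W` locally divides `H`. -/
theorem locallyDivides_iUnion [MetricSpace X] [CompactSpace X]
    {f : X → X} (hf : Continuous f) {m : ℕ} (hm : 1 ≤ m) {H : Fin m → Set X}
    (hH : IsClosedShiftSystem f H) {n : ℕ} (W : Fin n → Set X)
    (hW : ∀ j, LocallyDivides f H (W j))
    (hne : ∀ i, (H i \ ⋃ j, W j).Nonempty) :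
    LocallyDivides f H (⋃ j, W j) := by
  classical
  have hWinv : ∀ j, Set.MapsTo f (W j) (W j) := fun j => Set.mapsTo_iff_image_subset.2 (hW j).1
  have h3 : ∀ j : Fin n, ∃ Λ : Set (ℕ → Fin m), IsClosed Λ ∧ shiftMap m '' Λ ⊆ Λ ∧
      coverEntropy (shiftMap m) Λ < (Real.log m : EReal) ∧
      ∃ V ∈ nhdsSet (W j), ∀ (x : X) (k : ℕ), 1 ≤ k →
        (∀ i < k, f^[i] x ∈ V \ W j) → itinN f H k x ⊆ initWords Λ k := fun j => (hW j).2.2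
  choose Λs hclos hshift hent VV hVmem hP using h3
  have hshiftM : ∀ j, Set.MapsTo (shiftMap m) (Λs j) (Λs j) := fun j => Set.mapsTo_iff_image_subset.2 (hshift j)
  obtain ⟨N, hN1, hentBig⟩ := LDAux.exists_N_entropy hm Λs hent
  have hO : ∀ j, ∃ O, IsOpen O ∧ W j ⊆ O ∧ O ⊆ VV j := fun j => mem_nhdsSet_iff_exists.1 (hVmem j)
  choose O hOopen hWO hOV using hO
  set U : Fin n → Set X := fun j => ⋂ i ∈ Finset.range (N + 1), f^[i] ⁻¹' (O j) with hU
  have hUopen : ∀ j, IsOpen (U j) := fun j =>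
    isOpen_biInter_finset fun i _ => ((hf.iterate i).isOpen_preimage _ (hOopen j))
  have hWU : ∀ j, W j ⊆ U j := by
    intro j x hx
    rw [hU]
    simp only [Set.mem_iInter, Set.mem_preimage]
    intro i _
    exact hWO j (((hWinv j).iterate i) hx)
  have hUO : ∀ j (x : X), x ∈ U j → ∀ i, i ≤ N → f^[i] x ∈ O j := by
    intro j x hx i hi
    rw [hU] at hx
    simp only [Set.mem_iInter, Set.mem_preimage] at hx
    exact hx i (Finset.mem_range.2 (by omega))
  refine ⟨?_, hne, LDAux.bigLam Λs N, LDAux.bigLam_closed Λs N,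
    Set.mapsTo_iff_image_subset.1 (LDAux.bigLam_mapsTo Λs N), hentBig, ⋃ j, U j, ?_, ?_⟩
  · rw [Set.image_iUnion]
    exact Set.iUnion_mono fun j => (hW j).1
  · exact (isOpen_iUnion hUopen).mem_nhdsSet.2 (Set.iUnion_mono hWU)
  · intro x nn hnn horb w hw
    -- choose, for each time `k < nn`, an index `j` with `f^[k] x ∈ U j`
    have hsel : ∀ k, k < nn → ∃ j, f^[k] x ∈ U j := fun k hk =>
      Set.mem_iUnion.1 (horb k hk).1
    choose jj hjj using hsel
    set q : ℕ := nn - 1 with hqdef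
    have hq : q < nn := by omega
    -- the segment words are words of the corresponding Λ's
    have hseg : ∀ k (hk : k < nn), ∃ γ, γ ∈ Λs (jj k hk) ∧
        ∀ i, i < N + 1 → ∀ h2 : k + i < nn, γ i = w ⟨k + i, h2⟩ := by
      intro k hk
      set L : ℕ := min (N + 1) (nn - k) with hL
      have hL1 : 1 ≤ L := by omega
      have horbseg : ∀ i < L, f^[i] (f^[k] x) ∈ VV (jj k hk) \ W (jj k hk) := by
        intro i hi
        have hikn : k + i < nn := by omega
        have hrw : f^[i] (f^[k] x) = f^[k + i] x := by
          rw [← Function.iterate_add_apply]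
          congr 1
          omega
        rw [hrw]
        constructor
        · apply hOV (jj k hk)
          have := hUO (jj k hk) (f^[k] x) (hjj k hk) i (by omega)
          rw [hrw] at this
          exact this
        · intro hmem
          exact (horb (k + i) hikn).2 (Set.mem_iUnion.2 ⟨jj k hk, hmem⟩)
      have hitin : (fun i : Fin L => w ⟨k + (i : ℕ), by omega⟩) ∈ itinN f H L (f^[k] x) := by
        intro i
        have hikn : k + (i : ℕ) < nn := by omega
        have hrw : f^[(i : ℕ)] (f^[k] x) = f^[k + (i : ℕ)] x := by
          rw [← Function.iterate_add_apply]
          congr 1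
          omega
        rw [hrw]
        exact hw ⟨k + (i : ℕ), hikn⟩
      have hsub := hP (jj k hk) (f^[k] x) L hL1 horbseg hitin
      obtain ⟨γ, hγ, hγeq⟩ := hsub
      refine ⟨γ, hγ, fun i hi h2 => ?_⟩
      have hiL : i < L := by omega
      have := congrFun hγeq ⟨i, hiL⟩
      simpa using this
    choose γsel hγmem hγeq using hseg
    set β : ℕ → Fin m := γsel q hq with hβ
    set α : ℕ → Fin m := fun i => if h : i < nn then w ⟨i, h⟩ else β (i - q) with hα
    have hαw : ∀ i (h : i < nn), α i = w ⟨i, h⟩ := fun i h => dif_pos h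
    have hβ0 : β 0 = w ⟨q, hq⟩ := by
      have := hγeq q hq 0 (by omega) (by omega)
      simpa using this
    have hαβ : ∀ i, q ≤ i → α i = β (i - q) := by
      intro i hi
      rcases lt_or_ge i nn with h | h
      · have hiq : i = q := by omega
        rw [hiq, hαw q hq, Nat.sub_self, hβ0]
      · rw [hα]
        simp only
        rw [dif_neg (by omega)]
    have hmem : α ∈ LDAux.bigLam Λs N := by
      intro k
      rcases lt_or_ge k q with hk | hk
      · have hkn : k < nn := by omega
        rcases le_or_gt (N + 1) (nn - k) with hbig | hsmall
        · -- whole window is inside `w`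
          refine ⟨N + 1, jj k hkn, jj k hkn, by omega, le_refl _,
            ⟨γsel k hkn, hγmem k hkn, fun i hi => ?_⟩, Or.inl rfl⟩
          have h2 : k + i < nn := by omega
          rw [hαw (k + i) h2, hγeq k hkn i (by omega) h2]
        · -- split window at `q`
          refine ⟨q - k, jj k hkn, jj q hq, by omega, by omega,
            ⟨γsel k hkn, hγmem k hkn, fun i hi => ?_⟩,
            Or.inr ⟨β, hγmem q hq, fun i hle hlt => ?_⟩⟩
          · have h2 : k + i < nn := by omega
            rw [hαw (k + i) h2, hγeq k hkn i (by omega) h2]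
          · have hqk : q ≤ k + i := by omega
            rw [hαβ (k + i) hqk]
            congr 1
            omega
      · -- window inside the tail `β`
        refine ⟨N + 1, jj q hq, jj q hq, by omega, le_refl _,
          ⟨(shiftMap m)^[k - q] β, (hshiftM (jj q hq)).iterate (k - q) (hγmem q hq),
            fun i hi => ?_⟩, Or.inl rfl⟩
        rw [LDAux.shift_iter]
        have hqk : q ≤ k + i := by omega
        rw [hαβ (k + i) hqk]
        congr 1
        omega
    refine ⟨α, hmem, funext fun i => ?_⟩
    show α (i : ℕ) = w i
    rw [hαw (i : ℕ) i.2]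

-- #print axioms locallyDivides_iUnion
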